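/- Let k ≥ 1, s_1,…,s_k ∈ ℕ be the per-label counts of a group, n_1,…,n_k positive naturals with n = Σ_j n_j and f_j = n_j/n, and let K_1,…,K_k be positive reals satisfying Σ_j K_j·f_j = 1. Let i be an index maximizing s_j/(K_j·n_j) over j. For any real t ≥ 0 define Δ_j = −s_j + (K_j·n_j/(K_i·n_i))·(s_i + t). Then: (a) Δ_j ≥ 0 for every j; and (b) if s_i + t > 0, then for every j, (s_j + Δ_j)/Σ_l (s_l + Δ_l) = K_j·f_j, i.e., the mitigated group attains exactly the prescribed target ratios K_j between its label frequencies and the population label frequencies. -/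

import Mathlib

/-- Generalized mitigation with prescribed target ratios `K j > 0`
satisfying `Σ_j K j * f j = 1` (where `f j = nl j / n`). With `i` maximizing
`s j / (K j * nl j)` and free variable `t ≥ 0`, the additions
`Δ j = -s j + (K j * nl j / (K i * nl i)) * (s i + t)` are nonnegative and (if
`s i + t > 0`) the mitigated group's label frequencies equal `K j * f j`. -/
theorem general_mitigation_with_K (k : ℕ) (hk : 1 ≤ k) (s nl : Fin k → ℕ)
    (hn : ∀ j, 0 < nl j) (K : Fin k → ℝ) (hK : ∀ j, 0 < K j)
    (hKf : ∑ j, K j * ((nl j : ℝ) / (∑ l, (nl l : ℝ))) = 1)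
    (i : Fin k)
    (hi : ∀ j, (s j : ℝ) / (K j * (nl j : ℝ)) ≤ (s i : ℝ) / (K i * (nl i : ℝ)))
    (t : ℝ) (ht : 0 ≤ t) (Δ : Fin k → ℝ)
    (hΔ : ∀ j, Δ j = -(s j : ℝ) +
      (K j * (nl j : ℝ) / (K i * (nl i : ℝ))) * ((s i : ℝ) + t)) :
    (∀ j, 0 ≤ Δ j) ∧
      ((s i : ℝ) + t > 0 →
        ∀ j, ((s j : ℝ) + Δ j) / (∑ l, ((s l : ℝ) + Δ l)) =
          K j * ((nl j : ℝ) / (∑ l, (nl l : ℝ)))) := by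
  have hKn : ∀ j, 0 < K j * (nl j : ℝ) := fun j =>
    mul_pos (hK j) (by exact_mod_cast hn j)
  have hN : 0 < ∑ l, (nl l : ℝ) := by
    apply Finset.sum_pos (fun l _ => by exact_mod_cast hn l)
    exact Finset.univ_nonempty_iff.mpr ⟨i⟩
  have hsum : ∑ j, K j * (nl j : ℝ) = ∑ l, (nl l : ℝ) := by
    have : ∑ j, K j * ((nl j : ℝ) / (∑ l, (nl l : ℝ)))
        = (∑ j, K j * (nl j : ℝ)) / (∑ l, (nl l : ℝ)) := by
      rw [Finset.sum_div]
      exact Finset.sum_congr rfl fun j _ => by ring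
    rw [this] at hKf
    field_simp at hKf
    linarith
  have hnonneg : ∀ j, 0 ≤ Δ j := by
    intro j
    rw [hΔ j]
    have h1 : (s j : ℝ) ≤ (K j * (nl j : ℝ)) * ((s i : ℝ) / (K i * (nl i : ℝ))) := by
      have := hi j
      rw [div_le_div_iff₀ (hKn j) (hKn i)] at this
      rw [mul_div_assoc'] at *
      rw [le_div_iff₀ (hKn i)]
      linarith
    have h2 : 0 ≤ (K j * (nl j : ℝ) / (K i * (nl i : ℝ))) * t :=
      mul_nonneg (div_nonneg (hKn j).le (hKn i).le) ht
    have h3 : (K j * (nl j : ℝ) / (K i * (nl i : ℝ))) * ((s i : ℝ) + t)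
        = (K j * (nl j : ℝ)) * ((s i : ℝ) / (K i * (nl i : ℝ)))
          + (K j * (nl j : ℝ) / (K i * (nl i : ℝ))) * t := by ring
    linarith
  refine ⟨hnonneg, fun hpos j => ?_⟩
  have hsΔ : ∀ j, (s j : ℝ) + Δ j
      = (K j * (nl j : ℝ) / (K i * (nl i : ℝ))) * ((s i : ℝ) + t) := by
    intro j; rw [hΔ j]; ring
  have hsumΔ : ∑ l, ((s l : ℝ) + Δ l)
      = (∑ l, (nl l : ℝ)) / (K i * (nl i : ℝ)) * ((s i : ℝ) + t) := by
    rw [← hsum, Finset.sum_congr rfl fun l _ => hsΔ l, ← Finset.sum_mul,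
      ← Finset.sum_div]
  rw [hsΔ j, hsumΔ]
  have h0 : K i * (nl i : ℝ) ≠ 0 := (hKn i).ne'
  have hKi : K i ≠ 0 := (hK i).ne'
  have hni : (nl i : ℝ) ≠ 0 := by exact_mod_cast (hn i).ne'
  field_simp
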